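/- Under the hypotheses of the Riemannian-to-Lorentzian correspondence (T unit with geodesic flow and integrable normal bundle, g_L = g − 2T♭⊗T♭), the mixed curvature components agree: Rm_L(X,T,T,Y) = Rm(X,T,T,Y) for all X,Y orthogonal to T. In particular, Ric(T,T) = Ric_L(T,T). -/

import Mathlib

/-- An abstract calculus of smooth vector fields on a manifold `M`: a module of vector
fields over the smooth functions, together with a Lie bracket, a Riemannian metric `g`
and its Levi-Civita connection `nabla`. -/
structure SmoothVF (M : Type*) where
  VF : Type*
  [instAddCommGroup : AddCommGroup VF]
  [instModule : Module (M → ℝ) VF]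
  /-- the derivation action of a vector field on functions -/
  act : VF → (M → ℝ) → (M → ℝ)
  /-- the Lie bracket of vector fields -/
  bracket : VF → VF → VF
  /-- the Riemannian metric -/
  g : VF → VF → (M → ℝ)
  /-- the Levi-Civita connection of `g` -/
  nabla : VF → VF → VF
  g_symm : ∀ X Y, g X Y = g Y X
  g_add_left : ∀ X Y Z, g (X + Y) Z = g X Z + g Y Z
  g_smul_left : ∀ (f : M → ℝ) (X Y), g (f • X) Y = f * g X Y
  g_pos : ∀ X (p : M), 0 ≤ g X X p
  g_nondeg : ∀ X, (∀ Y, g X Y = 0) → X = 0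
  torsion_free : ∀ X Y, nabla X Y - nabla Y X = bracket X Y
  compat : ∀ X Y Z, act X (g Y Z) = g (nabla X Y) Z + g Y (nabla X Z)
  nabla_add_left : ∀ X Y Z, nabla (X + Y) Z = nabla X Z + nabla Y Z
  nabla_smul_left : ∀ (f : M → ℝ) (X Y), nabla (f • X) Y = f • nabla X Y
  nabla_add_right : ∀ X Y Z, nabla X (Y + Z) = nabla X Y + nabla X Z
  nabla_smul_right : ∀ (f : M → ℝ) (X Y), nabla X (f • Y) = act X f • Y + f • nabla X Y

attribute [instance] SmoothVF.instAddCommGroup SmoothVF.instModule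

namespace SmoothVF

variable {M : Type*} (D : SmoothVF M)

/-- The Riemann curvature 4-tensor of a connection `nab` with respect to a metric `gg`. -/
def riemOf (gg : D.VF → D.VF → (M → ℝ)) (nab : D.VF → D.VF → D.VF)
    (a b c d : D.VF) : M → ℝ :=
  gg (nab a (nab b c) - nab b (nab a c) - nab (D.bracket a b) c) d

/-- The Riemann curvature 4-tensor of `g`. -/
def Rm (a b c d : D.VF) : M → ℝ := D.riemOf D.g D.nabla a b c d

/-- The symmetric 2-tensor `∇T♭ : (X,Y) ↦ g(∇_X T, Y)`. -/
def nablaFlat (T : D.VF) (X Y : D.VF) : M → ℝ := D.g (D.nabla X T) Y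

/-- The Lorentzian sibling metric `g_L = g − 2T♭⊗T♭`. -/
def gLor (T : D.VF) (X Y : D.VF) : M → ℝ := D.g X Y - 2 * (D.g T X * D.g T Y)

/-- The Kulkarni–Nomizu product of two (symmetric) function-valued 2-tensors. -/
def kn (h k : D.VF → D.VF → (M → ℝ)) (a b c d : D.VF) : M → ℝ :=
  h a c * k b d + h b d * k a c - h a d * k b c - h b c * k a d

end SmoothVF

namespace SmoothVF

variable {M : Type*} (D : SmoothVF M)

/-- `nab` is the Levi-Civita connection of the metric `gg`: it is torsion-free,
compatible with `gg`, and tensorial/Leibniz in its arguments. -/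
def IsLeviCivitaOf (gg : D.VF → D.VF → (M → ℝ)) (nab : D.VF → D.VF → D.VF) : Prop :=
  (∀ X Y, nab X Y - nab Y X = D.bracket X Y) ∧
  (∀ X Y Z, D.act X (gg Y Z) = gg (nab X Y) Z + gg Y (nab X Z)) ∧
  (∀ X Y Z, nab (X + Y) Z = nab X Z + nab Y Z) ∧
  (∀ (f : M → ℝ) (X Y), nab (f • X) Y = f • nab X Y) ∧
  (∀ X Y Z, nab X (Y + Z) = nab X Y + nab X Z) ∧
  (∀ (f : M → ℝ) (X Y), nab X (f • Y) = D.act X f • Y + f • nab X Y)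

/-- Integrability of the orthogonal distribution `T^⊥`. -/
def PerpIntegrable (T : D.VF) : Prop :=
  ∀ X Y, D.g T X = 0 → D.g T Y = 0 → D.g T (D.bracket X Y) = 0

end SmoothVF


namespace SmoothVF

variable {M : Type*} (D : SmoothVF M)

lemma g_zero_left (Y : D.VF) : D.g 0 Y = 0 := by
  have h := D.g_add_left 0 0 Y
  rw [add_zero] at h
  exact right_eq_add.mp h

lemma g_add_right (X Y Z : D.VF) : D.g X (Y + Z) = D.g X Y + D.g X Z := by
  rw [D.g_symm X (Y + Z), D.g_add_left, D.g_symm Y X, D.g_symm Z X]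

lemma g_smul_right (f : M → ℝ) (X Y : D.VF) : D.g X (f • Y) = f * D.g X Y := by
  rw [D.g_symm X (f • Y), D.g_smul_left, D.g_symm Y X]

lemma g_zero_right (X : D.VF) : D.g X 0 = 0 := by
  rw [D.g_symm X 0, D.g_zero_left]

lemma g_neg_left (X Y : D.VF) : D.g (-X) Y = -(D.g X Y) := by
  have h := D.g_add_left X (-X) Y
  rw [add_neg_cancel, D.g_zero_left] at h
  exact (neg_eq_of_add_eq_zero_right h.symm).symm

lemma g_sub_left (X Y Z : D.VF) : D.g (X - Y) Z = D.g X Z - D.g Y Z := by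
  rw [sub_eq_add_neg, D.g_add_left, D.g_neg_left, sub_eq_add_neg]

lemma g_sub_right (X Y Z : D.VF) : D.g X (Y - Z) = D.g X Y - D.g X Z := by
  rw [D.g_symm X (Y - Z), D.g_sub_left, D.g_symm Y X, D.g_symm Z X]

lemma nabla_zero_right (X : D.VF) : D.nabla X 0 = 0 := by
  have h := D.nabla_add_right X 0 0
  rw [add_zero] at h
  exact right_eq_add.mp h

lemma nabla_neg_right (X Y : D.VF) : D.nabla X (-Y) = -(D.nabla X Y) := by
  have h := D.nabla_add_right X Y (-Y)
  rw [add_neg_cancel, D.nabla_zero_right] at h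
  exact eq_neg_of_add_eq_zero_right h.symm

lemma nabla_sub_right (X Y Z : D.VF) : D.nabla X (Y - Z) = D.nabla X Y - D.nabla X Z := by
  rw [sub_eq_add_neg, D.nabla_add_right, D.nabla_neg_right, sub_eq_add_neg]

lemma act_zero (X : D.VF) : D.act X 0 = 0 := by
  have h := D.compat X 0 0
  rw [D.g_zero_left, D.g_zero_left, D.g_zero_right, add_zero] at h
  exact h

section WithT

variable (T : D.VF) (hT : D.g T T = 1)

include hT

lemma smulT_eq_zero {c : M → ℝ} (h : c • T = 0) : c = 0 := by
  have h2 : D.g (c • T) T = 0 := by rw [h, D.g_zero_left]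
  rwa [D.g_smul_left, hT, mul_one] at h2

lemma act_one (X : D.VF) : D.act X 1 = 0 := by
  have h := D.nabla_smul_right 1 X T
  rw [one_smul, one_smul] at h
  exact D.smulT_eq_zero T hT (right_eq_add.mp h)

lemma S_T_right (X : D.VF) : D.g (D.nabla X T) T = 0 := by
  have h := D.compat X T T
  rw [hT, D.act_one T hT, D.g_symm T (D.nabla X T)] at h
  funext p
  have hp := congrFun h p
  simp only [Pi.add_apply, Pi.zero_apply] at hp ⊢
  linarith

/-- The reflection `W ↦ W − 2⟨T,W⟩T`, so that `g_L(X,Y) = g(LX, Y)`. -/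
def Lm (W : D.VF) : D.VF := W - (2 * D.g T W) • T

omit hT in
lemma gLor_eq_g_Lm (X Y : D.VF) : D.gLor T X Y = D.g (D.Lm T X) Y := by
  simp only [gLor, Lm, D.g_sub_left, D.g_smul_left]
  ring

omit hT in
lemma gLor_symm (X Y : D.VF) : D.gLor T X Y = D.gLor T Y X := by
  simp only [gLor]
  rw [D.g_symm X Y]
  ring

omit hT in
lemma gLor_sub_left (X Y Z : D.VF) : D.gLor T (X - Y) Z = D.gLor T X Z - D.gLor T Y Z := by
  simp only [gLor, D.g_sub_left, D.g_sub_right]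
  ring

lemma Lm_Lm (W : D.VF) : D.Lm T (D.Lm T W) = W := by
  simp only [Lm, D.g_sub_right, D.g_smul_right, hT]
  rw [sub_sub, ← add_smul]
  have : 2 * D.g T W + 2 * (D.g T W - 2 * D.g T W * 1) = 0 := by ring
  rw [this, zero_smul, sub_zero]

lemma gLor_nondeg (W : D.VF) (h : ∀ Z, D.gLor T W Z = 0) : W = 0 := by
  have h2 : D.Lm T W = 0 := D.g_nondeg _ fun Z => by rw [← D.gLor_eq_g_Lm]; exact h Z
  have h3 := D.Lm_Lm T hT W
  rw [h2] at h3
  simp only [Lm, D.g_zero_right, mul_zero, zero_smul, sub_zero] at h3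
  exact h3.symm

lemma act_two_g (X Y : D.VF) :
    D.act X (2 * D.g T Y) = 2 * D.g (D.nabla X T) Y + 2 * D.g T (D.nabla X Y) := by
  have h : 2 * D.g T Y = D.g T (Y + Y) := by rw [D.g_add_right]; ring
  rw [h, D.compat X T (Y + Y), D.g_add_right, D.nabla_add_right, D.g_add_right]
  ring

variable (hgeo : D.nabla T T = 0) (hint : D.PerpIntegrable T)

include hgeo hint

lemma S_symm (X Y : D.VF) : D.g (D.nabla X T) Y = D.g (D.nabla Y T) X := by
  -- first, the perpendicular case
  have hperp : ∀ Y Z : D.VF, D.g T Y = 0 → D.g T Z = 0 →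
      D.g (D.nabla Y T) Z = D.g (D.nabla Z T) Y := by
    intro Y Z hY hZ
    have hb := hint Y Z hY hZ
    rw [← D.torsion_free, D.g_sub_right] at hb
    have e1 : D.g T (D.nabla Y Z) = - D.g (D.nabla Y T) Z := by
      have h := D.compat Y T Z
      rw [hZ, D.act_zero] at h
      exact (neg_eq_of_add_eq_zero_right h.symm).symm
    have e2 : D.g T (D.nabla Z Y) = - D.g (D.nabla Z T) Y := by
      have h := D.compat Z T Y
      rw [hY, D.act_zero] at h
      exact (neg_eq_of_add_eq_zero_right h.symm).symm
    rw [e1, e2] at hb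
    exact neg_inj.mp (sub_eq_zero.mp hb)
  -- reduce to the perpendicular case
  have hred : ∀ X Y : D.VF, D.g (D.nabla X T) Y =
      D.g (D.nabla (X - D.g T X • T) T) (Y - D.g T Y • T) := by
    intro X Y
    have hX : D.nabla X T = D.nabla (X - D.g T X • T) T + D.g T X • D.nabla T T := by
      rw [← D.nabla_smul_left, ← D.nabla_add_left, sub_add_cancel]
    rw [hX, hgeo, smul_zero, add_zero, D.g_sub_right, D.g_smul_right,
        D.S_T_right T hT, mul_zero, sub_zero]
  have hXp : D.g T (X - D.g T X • T) = 0 := by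
    rw [D.g_sub_right, D.g_smul_right, hT, mul_one, sub_self]
  have hYp : D.g T (Y - D.g T Y • T) = 0 := by
    rw [D.g_sub_right, D.g_smul_right, hT, mul_one, sub_self]
  rw [hred X Y, hred Y X, hperp _ _ hXp hYp]

end WithT

/-- The Koszul formula, for any torsion-free metric-compatible connection. -/
lemma koszul (gg : D.VF → D.VF → (M → ℝ)) (nab : D.VF → D.VF → D.VF)
    (hsym : ∀ X Y, gg X Y = gg Y X)
    (hsub : ∀ X Y Z, gg (X - Y) Z = gg X Z - gg Y Z)
    (htf : ∀ X Y, nab X Y - nab Y X = D.bracket X Y)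
    (hcomp : ∀ X Y Z, D.act X (gg Y Z) = gg (nab X Y) Z + gg Y (nab X Z))
    (X Y Z : D.VF) :
    gg (nab X Y) Z + gg (nab X Y) Z =
      D.act X (gg Y Z) + D.act Y (gg X Z) - D.act Z (gg X Y)
      + gg (D.bracket X Y) Z - gg (D.bracket X Z) Y - gg (D.bracket Y Z) X := by
  rw [hcomp X Y Z, hcomp Y X Z, hcomp Z X Y, ← htf X Y, ← htf X Z, ← htf Y Z,
      hsub, hsub, hsub, hsym Y (nab X Z), hsym X (nab Y Z), hsym X (nab Z Y)]
  ring

/-- The candidate Levi-Civita connection of the Lorentzian sibling metric. -/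
def nablaP (T : D.VF) (X Y : D.VF) : D.VF :=
  D.nabla X Y + (2 * D.g (D.nabla X T) Y) • T

lemma nablaP_torsion (T : D.VF) (hT : D.g T T = 1) (hgeo : D.nabla T T = 0)
    (hint : D.PerpIntegrable T) (X Y : D.VF) :
    D.nablaP T X Y - D.nablaP T Y X = D.bracket X Y := by
  simp only [nablaP]
  rw [D.S_symm T hT hgeo hint X Y, ← D.torsion_free]
  abel

lemma nablaP_compat (T : D.VF) (hT : D.g T T = 1) (X Y Z : D.VF) :
    D.act X (D.gLor T Y Z) = D.gLor T (D.nablaP T X Y) Z + D.gLor T Y (D.nablaP T X Z) := by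
  rw [D.gLor_eq_g_Lm T Y Z, D.compat X (D.Lm T Y) Z]
  have hnab : D.nabla X (D.Lm T Y) =
      D.nabla X Y - (2 * D.g (D.nabla X T) Y + 2 * D.g T (D.nabla X Y)) • T
        - (2 * D.g T Y) • D.nabla X T := by
    simp only [Lm]
    rw [D.nabla_sub_right, D.nabla_smul_right, D.act_two_g T hT X Y, sub_sub]
  rw [hnab]
  simp only [Lm, gLor, nablaP, D.g_sub_left, D.g_sub_right, D.g_add_left, D.g_add_right,
    D.g_smul_left, D.g_smul_right, hT]
  rw [D.g_symm Y T]
  ring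

lemma nablaL_eq (T : D.VF) (hT : D.g T T = 1) (hgeo : D.nabla T T = 0)
    (hint : D.PerpIntegrable T)
    (nablaL : D.VF → D.VF → D.VF) (hLC : D.IsLeviCivitaOf (D.gLor T) nablaL)
    (X Y : D.VF) : nablaL X Y = D.nablaP T X Y := by
  have key : ∀ Z, D.gLor T (nablaL X Y) Z = D.gLor T (D.nablaP T X Y) Z := by
    intro Z
    have k1 := D.koszul (D.gLor T) nablaL (D.gLor_symm T) (D.gLor_sub_left T)
      hLC.1 hLC.2.1 X Y Z
    have k2 := D.koszul (D.gLor T) (D.nablaP T) (D.gLor_symm T) (D.gLor_sub_left T)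
      (D.nablaP_torsion T hT hgeo hint) (D.nablaP_compat T hT) X Y Z
    have h := k1.trans k2.symm
    funext p
    have := congrFun h p
    simp only [Pi.add_apply] at this
    linarith
  have h0 : ∀ Z, D.gLor T (nablaL X Y - D.nablaP T X Y) Z = 0 := by
    intro Z
    rw [D.gLor_sub_left, key Z, sub_self]
  have := D.gLor_nondeg T hT _ h0
  exact sub_eq_zero.mp this

end SmoothVF

open SmoothVF

/-- Under the Riemannian-to-Lorentzian correspondence, the mixed curvature components
agree: `Rm_L(X,T,T,Y) = Rm(X,T,T,Y)` for `X, Y ⊥ T`; in particular, computing the Ricci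
curvatures in an orthonormal frame `{T, X₁, …, X_{n−1}}`, `Ric(T,T) = Ric_L(T,T)`. -/
theorem stmt13 {M : Type*} (D : SmoothVF M) (n : ℕ) (hn : 2 ≤ n)
    (T : D.VF) (hT : D.g T T = 1)
    (hgeo : D.nabla T T = 0) (hint : D.PerpIntegrable T)
    (nablaL : D.VF → D.VF → D.VF) (hLC : D.IsLeviCivitaOf (D.gLor T) nablaL)
    (X : Fin (n - 1) → D.VF) (hTX : ∀ i, D.g T (X i) = 0)
    (hXX : ∀ i j, D.g (X i) (X j) = if i = j then 1 else 0)
    (hframe : ∀ Z : D.VF, Z = D.g T Z • T + ∑ i, D.g (X i) Z • X i) :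
    (∀ Y Z : D.VF, D.g T Y = 0 → D.g T Z = 0 →
      D.riemOf (D.gLor T) nablaL Y T T Z = D.Rm Y T T Z) ∧
    (∑ i, D.riemOf (D.gLor T) nablaL (X i) T T (X i)) =
      (∑ i, D.Rm (X i) T T (X i)) := by
  have nEq := D.nablaL_eq T hT hgeo hint nablaL hLC
  have main : ∀ Y Z : D.VF, D.g T Y = 0 → D.g T Z = 0 →
      D.riemOf (D.gLor T) nablaL Y T T Z = D.Rm Y T T Z := by
    intro Y Z hY hZ
    have e0 : nablaL T T = 0 := by
      rw [nEq, nablaP, hgeo, D.g_zero_left, mul_zero, zero_smul, add_zero]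
    have e1 : nablaL Y (nablaL T T) = 0 := by
      rw [e0, nEq, nablaP, D.nabla_zero_right, D.g_zero_right, mul_zero, zero_smul, add_zero]
    have e2 : nablaL T (nablaL Y T) = D.nabla T (D.nabla Y T) := by
      rw [nEq Y T, nablaP, D.S_T_right T hT Y, mul_zero, zero_smul, add_zero,
        nEq T (D.nabla Y T), nablaP, hgeo, D.g_zero_left, mul_zero, zero_smul, add_zero]
    have e3 : nablaL (D.bracket Y T) T = D.nabla (D.bracket Y T) T := by
      rw [nEq, nablaP, D.S_T_right T hT, mul_zero, zero_smul, add_zero]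
    have eR : D.nabla Y (D.nabla T T) = 0 := by rw [hgeo, D.nabla_zero_right]
    simp only [riemOf, Rm, e1, e2, e3, eR]
    simp only [gLor, hZ, mul_zero, sub_zero]
  refine ⟨main, ?_⟩
  exact Finset.sum_congr rfl fun i _ => main (X i) (X i) (hTX i) (hTX i)
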